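/- Let G be the set of partitions of {1,...,m} having exactly one non-singleton block, that block having size congruent to 1 mod k (and size > 1). For a, b ∈ G with non-singleton blocks A, B respectively, the blocks A and B are disjoint if and only if a and b have a unique minimal upper bound in Π^(k)_m and this minimal upper bound is not in G. -/
import Mathlib

open Classical Set
noncomputable section

/-- The partition of `Fin m` whose only (possibly) non-singleton block is `B`. -/
def blockSetoid {m : ℕ} (B : Set (Fin m)) : Setoid (Fin m) :=
  ⟨fun x y => x = y ∨ (x ∈ B ∧ y ∈ B), by
    refine ⟨fun x => Or.inl rfl, ?_, ?_⟩
    · rintro x y (h | h)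
      · exact Or.inl h.symm
      · exact Or.inr ⟨h.2, h.1⟩
    · rintro x y z (h1 | h1) (h2 | h2)
      · exact Or.inl (h1.trans h2)
      · subst h1; exact Or.inr h2
      · subst h2; exact Or.inr h1
      · exact Or.inr ⟨h1.1, h2.2⟩⟩

/-- `Π^(k)_m`: partitions of `{1,…,m}` all of whose blocks have size ≡ 1 (mod k). -/
def Pik (k m : ℕ) : Set (Setoid (Fin m)) :=
  {s | ∀ c ∈ s.classes, c.ncard ≡ 1 [MOD k]}

/-- `I`: partitions with exactly one non-singleton block (the minimal building set of `Π_m`). -/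
def BSI (m : ℕ) : Set (Setoid (Fin m)) :=
  {s | ∃ B : Set (Fin m), 2 ≤ B.ncard ∧ s = blockSetoid B}

/-- `G`: partitions with exactly one non-singleton block, of size ≡ 1 (mod k). -/
def BSG (k m : ℕ) : Set (Setoid (Fin m)) :=
  {s | ∃ B : Set (Fin m), 2 ≤ B.ncard ∧ B.ncard ≡ 1 [MOD k] ∧ s = blockSetoid B}

/-- `z` is a minimal upper bound of the set `A` within the subposet `P`. -/
def IsMinUB {L : Type*} [PartialOrder L] (P : Set L) (A : Set L) (z : L) : Prop :=
  z ∈ P ∧ (∀ a ∈ A, a ≤ z) ∧ ∀ w ∈ P, (∀ a ∈ A, a ≤ w) → w ≤ z → w = z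

/-- Maximal elements of `S` lying below `x`. -/
def maxBelow {L : Type*} [PartialOrder L] (S : Set L) (x : L) : Set L :=
  {g ∈ S | g ≤ x ∧ ∀ g' ∈ S, g' ≤ x → g ≤ g' → g = g'}

/-- The support of a partition: union of its non-singleton blocks. -/
def suppPart {m : ℕ} (s : Setoid (Fin m)) : Set (Fin m) :=
  {x | ∃ y, x ≠ y ∧ s x y}
section Aux
variable {m : ℕ}

lemma blockSetoid_rel (B : Set (Fin m)) {x y : Fin m} :
    blockSetoid B x y ↔ x = y ∨ (x ∈ B ∧ y ∈ B) := Iff.rfl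

lemma blockSetoid_classes (B : Set (Fin m)) {c : Set (Fin m)}
    (hc : c ∈ (blockSetoid B).classes) : c.ncard = 1 ∨ c = B := by
  obtain ⟨y, rfl⟩ := hc
  by_cases hy : y ∈ B
  · right; ext x
    simp only [Set.mem_setOf_eq, blockSetoid_rel]
    constructor
    · rintro (rfl | h)
      · exact hy
      · exact h.1
    · intro hx; exact Or.inr ⟨hx, hy⟩
  · left
    have : {x | blockSetoid B x y} = {y} := by
      ext x
      simp only [Set.mem_setOf_eq, blockSetoid_rel, Set.mem_singleton_iff]
      constructor
      · rintro (rfl | h)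
        · rfl
        · exact absurd h.2 hy
      · rintro rfl; exact Or.inl rfl
    rw [this]; exact Set.ncard_singleton y

lemma blockSetoid_mem_Pik {k : ℕ} {B : Set (Fin m)} (hB : B.ncard ≡ 1 [MOD k]) :
    blockSetoid B ∈ Pik k m := by
  intro c hc
  rcases blockSetoid_classes B hc with h | rfl
  · rw [h]
  · exact hB

/-- The partition with two non-singleton blocks `A`, `B` (requires disjointness). -/
def twoBlock (A B : Set (Fin m)) (h : Disjoint A B) : Setoid (Fin m) :=
  ⟨fun x y => x = y ∨ (x ∈ A ∧ y ∈ A) ∨ (x ∈ B ∧ y ∈ B), by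
    refine ⟨fun x => Or.inl rfl, ?_, ?_⟩
    · rintro x y (rfl | ⟨h1, h2⟩ | ⟨h1, h2⟩)
      · exact Or.inl rfl
      · exact Or.inr (Or.inl ⟨h2, h1⟩)
      · exact Or.inr (Or.inr ⟨h2, h1⟩)
    · rintro x y z (rfl | ⟨h1, h2⟩ | ⟨h1, h2⟩) (rfl | ⟨h3, h4⟩ | ⟨h3, h4⟩)
      · exact Or.inl rfl
      · exact Or.inr (Or.inl ⟨h3, h4⟩)
      · exact Or.inr (Or.inr ⟨h3, h4⟩)
      · exact Or.inr (Or.inl ⟨h1, h2⟩)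
      · exact Or.inr (Or.inl ⟨h1, h4⟩)
      · exact absurd h3 (Set.disjoint_left.mp h h2)
      · exact Or.inr (Or.inr ⟨h1, h2⟩)
      · exact absurd h3 (Set.disjoint_right.mp h h2)
      · exact Or.inr (Or.inr ⟨h1, h4⟩)⟩

lemma twoBlock_rel {A B : Set (Fin m)} (h : Disjoint A B) {x y : Fin m} :
    twoBlock A B h x y ↔ x = y ∨ (x ∈ A ∧ y ∈ A) ∨ (x ∈ B ∧ y ∈ B) := Iff.rfl

lemma twoBlock_classes {A B : Set (Fin m)} (h : Disjoint A B) {c : Set (Fin m)}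
    (hc : c ∈ (twoBlock A B h).classes) : c.ncard = 1 ∨ c = A ∨ c = B := by
  obtain ⟨y, rfl⟩ := hc
  by_cases hyA : y ∈ A
  · right; left; ext x
    simp only [Set.mem_setOf_eq, twoBlock_rel]
    constructor
    · rintro (rfl | h1 | h1)
      · exact hyA
      · exact h1.1
      · exact absurd hyA (Set.disjoint_right.mp h h1.2)
    · intro hx; exact Or.inr (Or.inl ⟨hx, hyA⟩)
  · by_cases hyB : y ∈ B
    · right; right; ext x
      simp only [Set.mem_setOf_eq, twoBlock_rel]
      constructor
      · rintro (rfl | h1 | h1)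
        · exact hyB
        · exact absurd h1.2 hyA
        · exact h1.1
      · intro hx; exact Or.inr (Or.inr ⟨hx, hyB⟩)
    · left
      have : {x | twoBlock A B h x y} = {y} := by
        ext x
        simp only [Set.mem_setOf_eq, twoBlock_rel, Set.mem_singleton_iff]
        constructor
        · rintro (rfl | h1 | h1)
          · rfl
          · exact absurd h1.2 hyA
          · exact absurd h1.2 hyB
        · rintro rfl; exact Or.inl rfl
      rw [this]; exact Set.ncard_singleton y

lemma two_mem_of_ncard {A : Set (Fin m)} (hA : 2 ≤ A.ncard) :
    ∃ x ∈ A, ∃ y ∈ A, x ≠ y := by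
  obtain ⟨x, y, hx, hy, hxy⟩ := (Set.one_lt_ncard_iff (A.toFinite)).mp hA
  exact ⟨x, hx, y, hy, hxy⟩

end Aux

/-- For `a b : BSG k m` with non-singleton blocks `A`, `B`:
`A` and `B` are disjoint iff `a` and `b` have a unique minimal upper bound in `Pik k m`
and this minimal upper bound is not in `BSG k m`. -/
theorem stmt2 (k m : ℕ) (hk : 1 ≤ k) (A B : Set (Fin m))
    (hA : 2 ≤ A.ncard) (hA' : A.ncard ≡ 1 [MOD k])
    (hB : 2 ≤ B.ncard) (hB' : B.ncard ≡ 1 [MOD k]) :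
    Disjoint A B ↔
      ((∃! z, IsMinUB (Pik k m) {blockSetoid A, blockSetoid B} z) ∧
        ∀ z, IsMinUB (Pik k m) {blockSetoid A, blockSetoid B} z → z ∉ BSG k m) := by

  constructor
  · -- disjoint → unique minimal upper bound not in BSG
    intro hdisj
    have hz0Pik : twoBlock A B hdisj ∈ Pik k m := by
      intro c hc
      rcases twoBlock_classes hdisj hc with h | rfl | rfl
      · rw [h]
      · exact hA'
      · exact hB'
    have hub : ∀ s ∈ ({blockSetoid A, blockSetoid B} : Set (Setoid (Fin m))),
        s ≤ twoBlock A B hdisj := by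
      intro s hs
      rcases hs with rfl | rfl
      · rw [Setoid.le_def]
        rintro x y (rfl | h)
        · exact (twoBlock A B hdisj).refl' x
        · exact Or.inr (Or.inl h)
      · rw [Setoid.le_def]
        rintro x y (rfl | h)
        · exact (twoBlock A B hdisj).refl' x
        · exact Or.inr (Or.inr h)
    have hleast : ∀ w : Setoid (Fin m),
        (∀ s ∈ ({blockSetoid A, blockSetoid B} : Set (Setoid (Fin m))), s ≤ w) →
        twoBlock A B hdisj ≤ w := by
      intro w hw
      rw [Setoid.le_def]
      rintro x y (rfl | h1 | h1)
      · exact w.refl' x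
      · exact Setoid.le_def.mp (hw _ (Set.mem_insert _ _)) (Or.inr h1)
      · exact Setoid.le_def.mp (hw _ (Set.mem_insert_of_mem _ rfl)) (Or.inr h1)
    have hmin : IsMinUB (Pik k m) {blockSetoid A, blockSetoid B} (twoBlock A B hdisj) :=
      ⟨hz0Pik, hub, fun w _ hw hwle => le_antisymm hwle (hleast w hw)⟩
    have huniq : ∀ z, IsMinUB (Pik k m) {blockSetoid A, blockSetoid B} z →
        z = twoBlock A B hdisj := by
      intro z hz
      obtain ⟨hzP, hzub, hzmin⟩ := hz
      exact (hzmin _ hz0Pik hub (hleast z hzub)).symm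
    refine ⟨⟨twoBlock A B hdisj, hmin, huniq⟩, ?_⟩
    intro z hz hzG
    obtain ⟨C, hC2, hCk, hCeq⟩ := hzG
    have hz0eq : twoBlock A B hdisj = blockSetoid C := (huniq z hz).symm.trans hCeq
    obtain ⟨a1, ha1, a2, ha2, hane⟩ := two_mem_of_ncard hA
    obtain ⟨b1, hb1, b2, hb2, hbne⟩ := two_mem_of_ncard hB
    have hA1 : twoBlock A B hdisj a1 a2 := Or.inr (Or.inl ⟨ha1, ha2⟩)
    have hB1 : twoBlock A B hdisj b1 b2 := Or.inr (Or.inr ⟨hb1, hb2⟩)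
    rw [hz0eq] at hA1 hB1
    have ha1C : a1 ∈ C := by
      rcases hA1 with h | h
      · exact absurd h hane
      · exact h.1
    have hb1C : b1 ∈ C := by
      rcases hB1 with h | h
      · exact absurd h hbne
      · exact h.1
    have hcross : blockSetoid C a1 b1 := Or.inr ⟨ha1C, hb1C⟩
    rw [← hz0eq] at hcross
    rcases hcross with rfl | h | h
    · exact Set.disjoint_left.mp hdisj ha1 hb1
    · exact Set.disjoint_left.mp hdisj h.2 hb1
    · exact Set.disjoint_left.mp hdisj ha1 h.1
  · -- reverse direction (contrapositive)
    rintro ⟨⟨z, hz, -⟩, hnot⟩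
    by_contra hnd
    obtain ⟨p, hpA, hpB⟩ := Set.not_disjoint_iff.mp hnd
    obtain ⟨hzP, hzub, hzmin⟩ := hz
    have hAC : A ⊆ {x | z x p} := fun x hx =>
      Setoid.le_def.mp (hzub _ (Set.mem_insert _ _)) (Or.inr ⟨hx, hpA⟩)
    have hBC : B ⊆ {x | z x p} := fun x hx =>
      Setoid.le_def.mp (hzub _ (Set.mem_insert_of_mem _ rfl)) (Or.inr ⟨hx, hpB⟩)
    have hCk : ({x | z x p} : Set (Fin m)).ncard ≡ 1 [MOD k] := hzP _ ⟨p, rfl⟩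
    have hC2 : 2 ≤ ({x | z x p} : Set (Fin m)).ncard :=
      le_trans hA (Set.ncard_le_ncard hAC (Set.toFinite _))
    have hwub : ∀ s ∈ ({blockSetoid A, blockSetoid B} : Set (Setoid (Fin m))),
        s ≤ blockSetoid {x | z x p} := by
      intro s hs
      rcases hs with rfl | rfl
      · rw [Setoid.le_def]
        rintro x y (rfl | h)
        · exact Or.inl rfl
        · exact Or.inr ⟨hAC h.1, hAC h.2⟩
      · rw [Setoid.le_def]
        rintro x y (rfl | h)
        · exact Or.inl rfl
        · exact Or.inr ⟨hBC h.1, hBC h.2⟩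
    have hwle : blockSetoid {x | z x p} ≤ z := by
      rw [Setoid.le_def]
      rintro x y (rfl | ⟨hx, hy⟩)
      · exact z.refl' x
      · exact z.trans' hx (z.symm' hy)
    have heq := hzmin (blockSetoid {x | z x p}) (blockSetoid_mem_Pik hCk) hwub hwle
    exact hnot z ⟨hzP, hzub, hzmin⟩ ⟨{x | z x p}, hC2, hCk, heq.symm⟩
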